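/- Every prime p ≥ 29 is not 3-mighty; that is, for every prime p ≥ 29, 1 + p^{−3} ≤ ∏_{q prime, q > p} 1/(1 − q^{−3}). -/

import Mathlib

open scoped BigOperators

open Real

set_option maxHeartbeats 1000000
namespace MightyAux

lemma rpow_neg_three (q : ℕ) : ((q : ℝ)) ^ (-(3 : ℝ)) = (((q : ℝ)) ^ (3 : ℕ))⁻¹ := by
  rw [Real.rpow_neg (Nat.cast_nonneg q),
    show (3 : ℝ) = ((3 : ℕ) : ℝ) by norm_num, Real.rpow_natCast]

theorem master (p : ℕ) (hp : p.Prime) (S : Finset ℕ)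
    (hS : ∀ q ∈ S, q.Prime ∧ p < q)
    (hprod : 1 + (((p : ℝ)) ^ (3 : ℕ))⁻¹ ≤ ∏ q ∈ S, (1 - (((q : ℝ)) ^ (3 : ℕ))⁻¹)⁻¹) :
    1 + (p : ℝ) ^ (-(3 : ℝ)) ≤
      ∏' q : {q : ℕ // q.Prime ∧ p < q}, (1 - ((q : ℕ) : ℝ) ^ (-(3 : ℝ)))⁻¹ := by
  classical
  set g : ℕ → ℝ := fun q => (1 - (((q : ℝ)) ^ (3 : ℕ))⁻¹)⁻¹ with hg
  have hx : ∀ q : ℕ, q.Prime → (0 : ℝ) < (((q : ℝ)) ^ (3 : ℕ))⁻¹ ∧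
      (((q : ℝ)) ^ (3 : ℕ))⁻¹ ≤ 8⁻¹ := by
    intro q hq
    have h2 : (2 : ℝ) ≤ (q : ℝ) := by exact_mod_cast hq.two_le
    refine ⟨by positivity, ?_⟩
    rw [inv_le_inv₀ (by positivity) (by norm_num)]
    calc (8:ℝ) = 2 ^ (3:ℕ) := by norm_num
      _ ≤ (q:ℝ) ^ (3:ℕ) := by gcongr <;> norm_num
  have hone : ∀ q : ℕ, q.Prime → 1 ≤ g q := by
    intro q hq
    obtain ⟨h1, h2⟩ := hx q hq
    rw [hg]
    rw [le_inv_comm₀ (by norm_num) (by nlinarith)]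
    nlinarith
  have hpos : ∀ q : ℕ, q.Prime → 0 < g q := fun q hq => lt_of_lt_of_le one_pos (hone q hq)
  have hlog : ∀ q : ℕ, q.Prime → Real.log (g q) ≤ 2 * (((q : ℝ)) ^ (3 : ℕ))⁻¹ := by
    intro q hq
    obtain ⟨h1, h2⟩ := hx q hq
    have := Real.log_le_sub_one_of_pos (hpos q hq)
    have hb : g q ≤ 1 + 2 * (((q : ℝ)) ^ (3 : ℕ))⁻¹ := by
      rw [hg]
      simp only
      rw [show (1 - (((q : ℝ)) ^ (3 : ℕ))⁻¹)⁻¹ = 1 / (1 - (((q : ℝ)) ^ (3 : ℕ))⁻¹) from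
        (one_div _).symm, div_le_iff₀ (by nlinarith)]
      nlinarith
    nlinarith
  -- summability of q ^ (-3) over the subtype
  have hsum0 : Summable (fun n : ℕ => ((n : ℝ)) ^ (-(3 : ℝ))) :=
    Real.summable_nat_rpow.mpr (by norm_num)
  have hsum1 : Summable (fun q : {q : ℕ // q.Prime ∧ p < q} => (((q : ℕ) : ℝ)) ^ (-(3 : ℝ))) :=
    hsum0.subtype {q : ℕ | q.Prime ∧ p < q}
  have hsum2 : Summable (fun q : {q : ℕ // q.Prime ∧ p < q} => 2 * ((((q : ℕ) : ℝ)) ^ (3 : ℕ))⁻¹) := by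
    refine (hsum1.mul_left 2).congr fun q => ?_
    rw [rpow_neg_three]
  have hsumlog : Summable (fun q : {q : ℕ // q.Prime ∧ p < q} => Real.log (g q)) := by
    refine Summable.of_nonneg_of_le (fun q => Real.log_nonneg (hone q.1 q.2.1))
      (fun q => hlog q.1 q.2.1) hsum2
  have hm : Multipliable (fun q : {q : ℕ // q.Prime ∧ p < q} => g q.1) := by
    exact Real.multipliable_of_summable_log (fun q => hpos q.1 q.2.1) hsumlog
  -- finite product over S inside the subtype
  let T : Finset {q : ℕ // q.Prime ∧ p < q} :=
    S.attach.map ⟨fun x => ⟨x.1, hS x.1 x.2⟩, fun x y hxy => by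
      simp only [Subtype.mk.injEq] at hxy; exact Subtype.ext hxy⟩
  have hTprod : (∏ q ∈ T, g q.1) = ∏ q ∈ S, g q := by
    rw [Finset.prod_map]
    exact Finset.prod_attach S (fun q => g q)
  have hexp := Real.rexp_tsum_eq_tprod (f := fun (q : {q : ℕ // q.Prime ∧ p < q}) => g q.1)
      (fun q => hpos q.1 q.2.1) hsumlog
  have hTP : Real.exp (∑' q : {q : ℕ // q.Prime ∧ p < q}, Real.log (g q.1)) =
      ∏' q : {q : ℕ // q.Prime ∧ p < q}, g q.1 := hexp
  have hsum_le : (∑ q ∈ T, Real.log (g q.1)) ≤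
      ∑' q : {q : ℕ // q.Prime ∧ p < q}, Real.log (g q.1) :=
    Summable.sum_le_tsum T (fun i _ => Real.log_nonneg (hone i.1 i.2.1)) hsumlog
  have hfin : Real.exp (∑ q ∈ T, Real.log (g q.1)) = ∏ q ∈ T, g q.1 := by
    rw [Real.exp_sum]
    exact Finset.prod_congr rfl fun q _ => Real.exp_log (hpos q.1 q.2.1)
  have step1 : (∏ q ∈ T, g q.1) ≤ ∏' q : {q : ℕ // q.Prime ∧ p < q}, g q.1 := by
    rw [← hTP, ← hfin]
    exact Real.exp_le_exp.mpr hsum_le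
  calc 1 + (p : ℝ) ^ (-(3 : ℝ)) = 1 + (((p : ℝ)) ^ (3 : ℕ))⁻¹ := by rw [rpow_neg_three]
    _ ≤ ∏ q ∈ S, g q := hprod
    _ = ∏ q ∈ T, g q.1 := hTprod.symm
    _ ≤ ∏' q : {q : ℕ // q.Prime ∧ p < q}, g q.1 := step1
    _ = ∏' q : {q : ℕ // q.Prime ∧ p < q}, (1 - ((q : ℕ) : ℝ) ^ (-(3 : ℝ)))⁻¹ :=
        tprod_congr (fun q => by rw [rpow_neg_three])


theorem cover (a q1 q2 : ℕ) (hq1 : q1.Prime) (hq2 : q2.Prime) (h12 : q1 < q2)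
    (ha0 : 0 < a)
    (hnum : 1 + (((a : ℝ)) ^ (3 : ℕ))⁻¹ ≤
      (1 - (((q1 : ℝ)) ^ (3 : ℕ))⁻¹)⁻¹ * (1 - (((q2 : ℝ)) ^ (3 : ℕ))⁻¹)⁻¹)
    {p : ℕ} (hp : p.Prime) (hap : a ≤ p) (hpq : p < q1) :
    1 + (p : ℝ) ^ (-(3 : ℝ)) ≤
      ∏' q : {q : ℕ // q.Prime ∧ p < q}, (1 - ((q : ℕ) : ℝ) ^ (-(3 : ℝ)))⁻¹ := by
  refine master p hp {q1, q2} ?_ ?_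
  · intro q hq
    simp only [Finset.mem_insert, Finset.mem_singleton] at hq
    rcases hq with rfl | rfl
    · exact ⟨hq1, hpq⟩
    · exact ⟨hq2, hpq.trans h12⟩
  · rw [Finset.prod_insert (by simp [Nat.ne_of_lt h12]), Finset.prod_singleton]
    refine le_trans ?_ hnum
    have ha0' : (0 : ℝ) < (a : ℝ) := by exact_mod_cast ha0
    have hap' : ((a : ℝ)) ^ (3 : ℕ) ≤ ((p : ℝ)) ^ (3 : ℕ) :=
      pow_le_pow_left₀ ha0'.le (by exact_mod_cast hap) 3
    have hinv : (((p : ℝ)) ^ (3 : ℕ))⁻¹ ≤ (((a : ℝ)) ^ (3 : ℕ))⁻¹ :=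
      inv_anti₀ (pow_pos ha0' 3) hap'
    linarith
theorem small_case {p : ℕ} (hp : p.Prime) (hp29 : 29 ≤ p) (hlt : p < 1152) :
    1 + (p : ℝ) ^ (-(3 : ℝ)) ≤
      ∏' q : {q : ℕ // q.Prime ∧ p < q}, (1 - ((q : ℕ) : ℝ) ^ (-(3 : ℝ)))⁻¹ := by
  rcases lt_or_ge p 31 with h' | h
  · exact cover 29 31 37 (by norm_num) (by norm_num) (by norm_num) (by norm_num) (by norm_num) hp hp29 h'
  rcases lt_or_ge p 37 with h' | h
  · exact cover 31 37 41 (by norm_num) (by norm_num) (by norm_num) (by norm_num) (by norm_num) hp h h'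
  rcases lt_or_ge p 43 with h' | h
  · exact cover 37 43 47 (by norm_num) (by norm_num) (by norm_num) (by norm_num) (by norm_num) hp h h'
  rcases lt_or_ge p 47 with h' | h
  · exact cover 43 47 53 (by norm_num) (by norm_num) (by norm_num) (by norm_num) (by norm_num) hp h h'
  rcases lt_or_ge p 53 with h' | h
  · exact cover 47 53 59 (by norm_num) (by norm_num) (by norm_num) (by norm_num) (by norm_num) hp h h'
  rcases lt_or_ge p 61 with h' | h
  · exact cover 53 61 67 (by norm_num) (by norm_num) (by norm_num) (by norm_num) (by norm_num) hp h h'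
  rcases lt_or_ge p 73 with h' | h
  · exact cover 61 73 79 (by norm_num) (by norm_num) (by norm_num) (by norm_num) (by norm_num) hp h h'
  rcases lt_or_ge p 83 with h' | h
  · exact cover 73 83 89 (by norm_num) (by norm_num) (by norm_num) (by norm_num) (by norm_num) hp h h'
  rcases lt_or_ge p 101 with h' | h
  · exact cover 83 101 103 (by norm_num) (by norm_num) (by norm_num) (by norm_num) (by norm_num) hp h h'
  rcases lt_or_ge p 113 with h' | h
  · exact cover 101 113 127 (by norm_num) (by norm_num) (by norm_num) (by norm_num) (by norm_num) hp h h'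
  rcases lt_or_ge p 137 with h' | h
  · exact cover 113 137 139 (by norm_num) (by norm_num) (by norm_num) (by norm_num) (by norm_num) hp h h'
  rcases lt_or_ge p 167 with h' | h
  · exact cover 137 167 173 (by norm_num) (by norm_num) (by norm_num) (by norm_num) (by norm_num) hp h h'
  rcases lt_or_ge p 199 with h' | h
  · exact cover 167 199 211 (by norm_num) (by norm_num) (by norm_num) (by norm_num) (by norm_num) hp h h'
  rcases lt_or_ge p 241 with h' | h
  · exact cover 199 241 251 (by norm_num) (by norm_num) (by norm_num) (by norm_num) (by norm_num) hp h h'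
  rcases lt_or_ge p 293 with h' | h
  · exact cover 241 293 307 (by norm_num) (by norm_num) (by norm_num) (by norm_num) (by norm_num) hp h h'
  rcases lt_or_ge p 359 with h' | h
  · exact cover 293 359 367 (by norm_num) (by norm_num) (by norm_num) (by norm_num) (by norm_num) hp h h'
  rcases lt_or_ge p 443 with h' | h
  · exact cover 359 443 449 (by norm_num) (by norm_num) (by norm_num) (by norm_num) (by norm_num) hp h h'
  rcases lt_or_ge p 547 with h' | h
  · exact cover 443 547 557 (by norm_num) (by norm_num) (by norm_num) (by norm_num) (by norm_num) hp h h'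
  rcases lt_or_ge p 683 with h' | h
  · exact cover 547 683 691 (by norm_num) (by norm_num) (by norm_num) (by norm_num) (by norm_num) hp h h'
  rcases lt_or_ge p 857 with h' | h
  · exact cover 683 857 859 (by norm_num) (by norm_num) (by norm_num) (by norm_num) (by norm_num) hp h h'
  rcases lt_or_ge p 1069 with h' | h
  · exact cover 857 1069 1087 (by norm_num) (by norm_num) (by norm_num) (by norm_num) (by norm_num) hp h h'
  exact cover 1069 1327 1361 (by norm_num) (by norm_num) (by norm_num) (by norm_num) (by norm_num) hp h (by omega)
theorem real_main_ineq {x : ℝ} (hx : (1152 : ℝ) ≤ x) :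
    x * (2 * x) ^ (√(2 * x) + 7) * 4 ^ (2 * x / 3) ≤ 4 ^ x := by
  let f : ℝ → ℝ := fun y => 8 * log y + √(2 * y) * log (2 * y) + 7 * log 2 - log 4 / 3 * y
  have h5 : 0 < x := by linarith
  have h2x : (0 : ℝ) < 2 * x := by linarith
  have l4 : log (4 : ℝ) = 2 * log 2 := by
    rw [show (4 : ℝ) = 2 ^ (2 : ℕ) by norm_num, Real.log_pow]
    push_cast; ring
  -- reduce to f x ≤ 0
  suffices hfx : f x ≤ 0 by
    rw [← Real.log_le_log_iff (by positivity) (by positivity),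
      Real.log_mul (by positivity) (by positivity),
      Real.log_mul h5.ne' (by positivity),
      Real.log_rpow h2x, Real.log_rpow (by norm_num), Real.log_rpow (by norm_num)]
    have l2x : log (2 * x) = log 2 + log x := Real.log_mul (by norm_num) h5.ne'
    have hfx' : 8 * log x + √(2 * x) * log (2 * x) + 7 * log 2 - log 4 / 3 * x ≤ 0 := hfx
    rw [l2x, l4] at hfx' ⊢
    ring_nf at hfx' ⊢
    linarith [hfx']
  -- concavity of f
  have h : ConcaveOn ℝ (Set.Ioi 0.5) f := by
    refine ConcaveOn.sub (ConcaveOn.add (ConcaveOn.add ?_ ?_) ?_) ?_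
    · have hlog : ConcaveOn ℝ (Set.Ioi (0.5 : ℝ)) log :=
        strictConcaveOn_log_Ioi.concaveOn.subset (Set.Ioi_subset_Ioi (by norm_num))
          (convex_Ioi 0.5)
      have h8 : (fun y : ℝ => 8 * log y) = (8 : ℝ) • (log : ℝ → ℝ) := by
        ext y; simp [smul_eq_mul]
      rw [h8]
      exact hlog.smul (by norm_num)
    · convert ((strictConcaveOn_sqrt_mul_log_Ioi.concaveOn.comp_linearMap
        ((2 : ℝ) • LinearMap.id))) using 1
      · rfl
      · rfl
      ext y
      simp only [Set.mem_Ioi, Set.mem_preimage, LinearMap.smul_apply,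
        LinearMap.id_coe, id_eq, smul_eq_mul]
      rw [← mul_lt_mul_iff_right₀ (two_pos)]
      norm_num1
      rfl
      · ext y; simp
    · exact concaveOn_const _ (convex_Ioi 0.5)
    · apply ConvexOn.smul
      · exact div_nonneg (Real.log_nonneg (by norm_num1)) (by norm_num1)
      · exact convexOn_id (convex_Ioi (0.5 : ℝ))
  suffices h2 : ∃ x1 x2, 0.5 < x1 ∧ x1 < x2 ∧ x2 ≤ x ∧ 0 ≤ f x1 ∧ f x2 ≤ 0 by
    obtain ⟨x1, x2, h1, h2, h0, h3, h4⟩ := h2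
    exact (h.right_le_of_le_left'' h1 ((h1.trans h2).trans_le h0) h2 h0 (h4.trans h3)).trans h4
  refine ⟨18, 1152, by norm_num1, by norm_num1, hx, ?_, ?_⟩
  · have hs : √(2 * (18 : ℝ)) = 6 :=
      (Real.sqrt_eq_iff_mul_self_eq_of_pos (by norm_num1)).mpr (by norm_num1)
    show (0 : ℝ) ≤ 8 * log 18 + √(2 * 18) * log (2 * 18) + 7 * log 2 - log 4 / 3 * 18
    rw [hs, l4, show (2 * (18:ℝ)) = 36 by norm_num]
    have h1 : log 2 ≤ log 18 := Real.log_le_log (by norm_num) (by norm_num)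
    have h2 : (0 : ℝ) ≤ log 36 := Real.log_nonneg (by norm_num)
    have h3 : (0 : ℝ) ≤ log 2 := Real.log_nonneg (by norm_num)
    linarith
  · have hs : √(2 * (1152 : ℝ)) = 48 :=
      (Real.sqrt_eq_iff_mul_self_eq_of_pos (by norm_num1)).mpr (by norm_num1)
    show 8 * log 1152 + √(2 * 1152) * log (2 * 1152) + 7 * log 2 - log 4 / 3 * 1152 ≤ 0
    rw [hs, l4, show (2 * (1152:ℝ)) = 2304 by norm_num]
    have h1 : log 1152 ≤ 11 * log 2 := by
      rw [show (11:ℝ) * log 2 = log (2 ^ (11:ℕ)) by rw [Real.log_pow]; push_cast; ring]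
      exact Real.log_le_log (by norm_num) (by norm_num)
    have h2 : log 2304 ≤ 12 * log 2 := by
      rw [show (12:ℝ) * log 2 = log (2 ^ (12:ℕ)) by rw [Real.log_pow]; push_cast; ring]
      exact Real.log_le_log (by norm_num) (by norm_num)
    have h3 : (0 : ℝ) ≤ log 2 := Real.log_nonneg (by norm_num)
    linarith
theorem nat_main_ineq {n : ℕ} (h : 1152 ≤ n) :
    n * (2 * n) ^ (Nat.sqrt (2 * n) + 7) * 4 ^ (2 * n / 3) ≤ 4 ^ n := by
  rw [← @Nat.cast_le ℝ]
  simp only [Nat.cast_mul, Nat.cast_pow, ← Real.rpow_natCast]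
  refine _root_.trans ?_ (real_main_ineq (by exact_mod_cast h))
  have n2_pos : 0 < 2 * n := by omega
  gcongr
  · have hsq : (((2 * n).sqrt : ℕ) : ℝ) ≤ √(((2 * n : ℕ) : ℝ)) := Real.nat_sqrt_le_real_sqrt
    push_cast at hsq ⊢
    apply Real.rpow_le_rpow_of_exponent_le (by norm_cast)
    push_cast
    linarith
  · exact Real.rpow_le_rpow_of_exponent_le (by norm_num) (Nat.cast_div_le.trans (by norm_cast))

theorem count8 {n : ℕ} (h : 1152 ≤ n) :
    8 ≤ ((Finset.Ioc n (2 * n)).filter Nat.Prime).card := by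
  by_contra hc
  push_neg at hc
  have hcard : ((Finset.Ioc n (2 * n)).filter Nat.Prime).card ≤ 7 := by omega
  set S := (Finset.Ioc n (2 * n)).filter Nat.Prime with hSdef
  have n_pos : 0 < n := by omega
  have n2_pos : 0 < 2 * n := by omega
  have n_big : 2 < n := by omega
  -- part B : the product over Ico (2*n/3+1) (2*n+1)
  have hSsub : S ⊆ Finset.Ico (2 * n / 3 + 1) (2 * n + 1) := by
    intro q hq
    simp only [hSdef, Finset.mem_filter, Finset.mem_Ioc] at hq
    simp only [Finset.mem_Ico]
    constructor
    · have : 2 * n / 3 ≤ n := by omega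
      omega
    · omega
  have hBeq : (∏ q ∈ Finset.Ico (2 * n / 3 + 1) (2 * n + 1), q ^ (Nat.centralBinom n).factorization q) = ∏ q ∈ S, q ^ (Nat.centralBinom n).factorization q := by
    refine (Finset.prod_subset hSsub ?_).symm
    intro q hq hqS
    simp only [Finset.mem_Ico] at hq
    by_cases hpr : q.Prime
    · have hqn : q ≤ n := by
        simp only [hSdef, Finset.mem_filter, Finset.mem_Ioc] at hqS
        -- q ≤ 2*n automatically; so failure of membership means ¬ n < q
        by_contra hqn
        push_neg at hqn
        exact hqS ⟨⟨hqn, by omega⟩, hpr⟩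
      have h3q : 2 * n < 3 * q := by omega
      rw [Nat.factorization_centralBinom_of_two_mul_self_lt_three_mul n_big hqn h3q]
      exact pow_zero q
    · rw [Nat.factorization_eq_zero_of_not_prime _ hpr]
      exact pow_zero q
  have hB : (∏ q ∈ S, q ^ (Nat.centralBinom n).factorization q) ≤ (2 * n) ^ (7 : ℕ) := by
    calc (∏ q ∈ S, q ^ (Nat.centralBinom n).factorization q) ≤ ∏ q ∈ S, (2 * n) := by
          refine Finset.prod_le_prod' fun q hq => ?_
          exact Nat.pow_factorization_choose_le n2_pos
      _ = (2 * n) ^ S.card := Finset.prod_const _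
      _ ≤ (2 * n) ^ (7 : ℕ) := Nat.pow_le_pow_right (by omega) hcard
  -- part A : the product over range (2*n/3+1)
  have hA : (∏ q ∈ Finset.range (2 * n / 3 + 1), q ^ (Nat.centralBinom n).factorization q) ≤
      (2 * n) ^ Nat.sqrt (2 * n) * 4 ^ (2 * n / 3) := by
    let S' := (Finset.range (2 * n / 3 + 1)).filter Nat.Prime
    have hfilter : (∏ q ∈ S', q ^ (Nat.centralBinom n).factorization q) = ∏ q ∈ Finset.range (2 * n / 3 + 1), q ^ (Nat.centralBinom n).factorization q := by
      refine Finset.prod_filter_of_ne fun q _ hne => ?_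
      contrapose! hne
      rw [Nat.factorization_eq_zero_of_not_prime _ hne, pow_zero]
    rw [← hfilter, ← Finset.prod_filter_mul_prod_filter_not S' (· ≤ Nat.sqrt (2 * n))]
    apply Nat.mul_le_mul
    · refine (Finset.prod_le_prod' fun q _ => (?_ : q ^ (Nat.centralBinom n).factorization q ≤ 2 * n)).trans ?_
      · exact Nat.pow_factorization_choose_le n2_pos
      have hcard2 : (Finset.Icc 1 (Nat.sqrt (2 * n))).card = Nat.sqrt (2 * n) := by
        rw [Nat.card_Icc, Nat.add_sub_cancel]
      rw [Finset.prod_const]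
      refine pow_right_mono₀ (by omega) ((Finset.card_le_card fun x hx => ?_).trans hcard2.le)
      obtain ⟨h1, h2⟩ := Finset.mem_filter.1 hx
      exact Finset.mem_Icc.mpr ⟨(Finset.mem_filter.1 h1).2.one_lt.le, h2⟩
    · refine le_trans ?_ (primorial_le_4_pow (2 * n / 3))
      refine (Finset.prod_le_prod' fun q hq => (?_ : q ^ (Nat.centralBinom n).factorization q ≤ q)).trans ?_
      · obtain ⟨h1, h2⟩ := Finset.mem_filter.1 hq
        refine (pow_right_mono₀ (Finset.mem_filter.1 h1).2.one_lt.le ?_).trans (pow_one q).le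
        exact Nat.factorization_choose_le_one (Nat.sqrt_lt'.mp <| not_le.1 h2)
      refine Finset.prod_le_prod_of_subset_of_one_le' (Finset.filter_subset _ _) ?_
      exact fun q hq _ => (Finset.mem_filter.1 hq).2.one_lt.le
  -- combine
  have hsplit : (∏ q ∈ Finset.range (2 * n / 3 + 1), q ^ (Nat.centralBinom n).factorization q) *
        (∏ q ∈ Finset.Ico (2 * n / 3 + 1) (2 * n + 1), q ^ (Nat.centralBinom n).factorization q) =
      Nat.centralBinom n := by
    conv_rhs => rw [← Nat.prod_pow_factorization_centralBinom n]
    rw [Finset.range_eq_Ico, Finset.range_eq_Ico]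
    exact Finset.prod_Ico_consecutive _ (by omega) (by omega)
  have key : Nat.centralBinom n ≤
      ((2 * n) ^ Nat.sqrt (2 * n) * 4 ^ (2 * n / 3)) * (2 * n) ^ (7 : ℕ) := by
    rw [← hsplit, hBeq]
    exact Nat.mul_le_mul hA hB
  have H2 : 4 ^ n < n * Nat.centralBinom n := Nat.four_pow_lt_mul_centralBinom n (by omega)
  have H1 : n * (2 * n) ^ (Nat.sqrt (2 * n) + 7) * 4 ^ (2 * n / 3) ≤ 4 ^ n := nat_main_ineq h
  have : n * Nat.centralBinom n ≤ n * (((2 * n) ^ Nat.sqrt (2 * n) * 4 ^ (2 * n / 3)) * (2 * n) ^ (7 : ℕ)) :=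
    Nat.mul_le_mul_left n key
  rw [pow_add] at H1
  nlinarith [this, H1, H2]

theorem one_add_sum_le_prod (S : Finset ℕ) (f : ℕ → ℝ) (h0 : ∀ q ∈ S, 0 ≤ f q) :
    1 + ∑ q ∈ S, f q ≤ ∏ q ∈ S, (1 + f q) := by
  classical
  induction S using Finset.cons_induction with
  | empty => simp
  | cons a s ha ih =>
    rw [Finset.sum_cons, Finset.prod_cons]
    have h0a := h0 a (Finset.mem_cons_self a s)
    have hs : ∀ q ∈ s, 0 ≤ f q := fun q hq => h0 q (Finset.mem_cons_of_mem hq)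
    have ihs := ih hs
    have hsum : 0 ≤ ∑ q ∈ s, f q := Finset.sum_nonneg hs
    nlinarith [ihs, h0a, hsum]

theorem large_case {p : ℕ} (hp : p.Prime) (h1152 : 1152 ≤ p) :
    1 + (p : ℝ) ^ (-(3 : ℝ)) ≤
      ∏' q : {q : ℕ // q.Prime ∧ p < q}, (1 - ((q : ℕ) : ℝ) ^ (-(3 : ℝ)))⁻¹ := by
  set S := (Finset.Ioc p (2 * p)).filter Nat.Prime with hSdef
  have hmem : ∀ q ∈ S, q.Prime ∧ p < q ∧ q ≤ 2 * p := by
    intro q hq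
    simp only [hSdef, Finset.mem_filter, Finset.mem_Ioc] at hq
    exact ⟨hq.2, hq.1.1, hq.1.2⟩
  refine master p hp S (fun q hq => ⟨(hmem q hq).1, (hmem q hq).2.1⟩) ?_
  calc 1 + (((p : ℝ)) ^ (3 : ℕ))⁻¹
      ≤ 1 + ∑ q ∈ S, (((q : ℝ)) ^ (3 : ℕ))⁻¹ := by
        have hcard := count8 h1152
        have hterm : ∀ q ∈ S, (((2 * p : ℕ) : ℝ) ^ (3 : ℕ))⁻¹ ≤ (((q : ℝ)) ^ (3 : ℕ))⁻¹ := by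
          intro q hq
          apply inv_anti₀
          · exact pow_pos (by exact_mod_cast (hmem q hq).1.pos) 3
          · have hq2p : (q : ℝ) ≤ ((2 * p : ℕ) : ℝ) := by exact_mod_cast (hmem q hq).2.2
            have hq0 : (0:ℝ) ≤ (q:ℝ) := Nat.cast_nonneg q
            exact pow_le_pow_left₀ hq0 hq2p 3
        have hsum : (S.card : ℝ) * (((2 * p : ℕ) : ℝ) ^ (3 : ℕ))⁻¹ ≤
            ∑ q ∈ S, (((q : ℝ)) ^ (3 : ℕ))⁻¹ := by
          calc (S.card : ℝ) * (((2 * p : ℕ) : ℝ) ^ (3 : ℕ))⁻¹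
              = ∑ _q ∈ S, (((2 * p : ℕ) : ℝ) ^ (3 : ℕ))⁻¹ := by
                rw [Finset.sum_const, nsmul_eq_mul]
            _ ≤ ∑ q ∈ S, (((q : ℝ)) ^ (3 : ℕ))⁻¹ := Finset.sum_le_sum hterm
        have h8 : (8 : ℝ) * (((2 * p : ℕ) : ℝ) ^ (3 : ℕ))⁻¹ ≤
            (S.card : ℝ) * (((2 * p : ℕ) : ℝ) ^ (3 : ℕ))⁻¹ := by
          apply mul_le_mul_of_nonneg_right
          · exact_mod_cast hcard
          · positivity
        have heq : (8 : ℝ) * (((2 * p : ℕ) : ℝ) ^ (3 : ℕ))⁻¹ = (((p : ℝ)) ^ (3 : ℕ))⁻¹ := by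
          push_cast
          rw [mul_pow, mul_inv]
          norm_num
          ring
        linarith [hsum, h8, heq.ge, heq.le]
    _ ≤ ∏ q ∈ S, (1 + (((q : ℝ)) ^ (3 : ℕ))⁻¹) := by
        refine one_add_sum_le_prod S _ fun q hq => ?_
        positivity
    _ ≤ ∏ q ∈ S, (1 - (((q : ℝ)) ^ (3 : ℕ))⁻¹)⁻¹ := by
        refine Finset.prod_le_prod (fun q hq => by positivity) fun q hq => ?_
        have hq2 : (2 : ℝ) ≤ (q : ℝ) := by exact_mod_cast (hmem q hq).1.two_le
        have hx1 : (((q : ℝ)) ^ (3 : ℕ))⁻¹ ≤ 8⁻¹ := by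
          rw [inv_le_inv₀ (by positivity) (by norm_num)]
          calc (8:ℝ) = 2 ^ (3:ℕ) := by norm_num
            _ ≤ (q:ℝ) ^ (3:ℕ) := by gcongr <;> norm_num
        have hx0 : (0:ℝ) < (((q : ℝ)) ^ (3 : ℕ))⁻¹ := by
          have : (0:ℝ) < (q:ℝ) := by linarith
          positivity
        rw [show (1 - (((q : ℝ)) ^ (3 : ℕ))⁻¹)⁻¹ = 1 / (1 - (((q : ℝ)) ^ (3 : ℕ))⁻¹) from
          (one_div _).symm, le_div_iff₀ (by nlinarith)]
        nlinarith
end MightyAux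

open scoped BigOperators

/-- Every prime `p ≥ 29` is not `3`-mighty:
`1 + p^{-3} ≤ ∏_{q prime, q > p} 1/(1 - q^{-3})`. -/
theorem stmt_16 (p : ℕ) (hp : p.Prime) (hp29 : 29 ≤ p) :
    1 + (p : ℝ) ^ (-(3 : ℝ)) ≤
      ∏' q : {q : ℕ // q.Prime ∧ p < q}, (1 - ((q : ℕ) : ℝ) ^ (-(3 : ℝ)))⁻¹ := by
  rcases le_or_gt 1152 p with h | h
  · exact MightyAux.large_case hp h
  · exact MightyAux.small_case hp hp29 h
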